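/- Let d be a positive integer. Every positive integer a can be written uniquely in the form a = C(k_d, d) + C(k_{d-1}, d-1) + ... + C(k_2, 2) + C(k_1, 1), where k_d > k_{d-1} > ... > k_2 ≥ k_1 ≥ 1 (with the convention C(p,q) = 0 when p < q). That is, such integers k_d, ..., k_1 exist and are uniquely determined by a and d. -/

import Mathlib

/-- The conditions `k_d > k_{d-1} > … > k_2 ≥ k_1 ≥ 1` on a tuple
`(k_1,…,k_d)` (encoded as `k : Fin d → ℕ` with `k ⟨i-1,_⟩ = k_i`). -/
def FracCond (d : ℕ) (k : Fin d → ℕ) : Prop :=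
  (∀ h : 0 < d, 1 ≤ k ⟨0, h⟩) ∧
  ∀ (i : ℕ) (h : i + 1 < d),
    if i = 0 then k ⟨i, Nat.lt_of_succ_lt h⟩ ≤ k ⟨i + 1, h⟩
    else k ⟨i, Nat.lt_of_succ_lt h⟩ < k ⟨i + 1, h⟩

/-- `k : Fin d → ℕ` encodes the `d`-fractal decomposition of `a`:
`a = C(k_d,d) + C(k_{d-1},d-1) + … + C(k_2,2) + C(k_1,1)` with
`k_d > k_{d-1} > … > k_2 ≥ k_1 ≥ 1` (where `C(p,q) = 0` if `p < q`). -/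
def IsFracDecomp (d a : ℕ) (k : Fin d → ℕ) : Prop :=
  FracCond d k ∧ a = ∑ i : Fin d, (k i).choose ((i : ℕ) + 1)

/-- The `d`-fractal coefficients `[a]^{(d)} = (k_d-d+2, k_{d-1}-d+3, …, k_3-1, k_2, k_1)`
of a decomposition `k`: the coefficient `c_i` (for the term `C(k_i, i)`) is
`c_1 = k_1` and `c_i = k_i - i + 2` for `i ≥ 2`; in the `Fin d` encoding
(index `i` stands for `k_{i+1}`) this is `c ⟨i⟩ = k ⟨i⟩ + 1 - i` for `i ≥ 1`. -/
def fracCoeff (d : ℕ) (k : Fin d → ℕ) (i : Fin d) : ℕ :=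
  if (i : ℕ) = 0 then k i else k i + 1 - (i : ℕ)

open Finset

lemma myLtChoose (b d : ℕ) : b < (b + d + 1).choose (d + 1) := by
  induction b with
  | zero => simpa using Nat.choose_pos (le_refl (d+1))
  | succ b ih =>
    have h : b + 1 + d + 1 = (b + d + 1) + 1 := by ring
    rw [h, Nat.choose_succ_succ]
    have h1 : 1 ≤ (b + d + 1).choose d := Nat.choose_pos (by omega)
    simp only [Nat.succ_eq_add_one] at *
    omega

lemma mySumLt : ∀ (d N : ℕ) (g : Fin d → ℕ), StrictMono g → (∀ i, g i < N) →
    (∑ i : Fin d, (g i).choose ((i : ℕ) + 1)) < N.choose d := by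
  intro d
  induction d with
  | zero => intro N g _ _; simpa using Nat.choose_pos (Nat.zero_le N)
  | succ d ih =>
    intro N g hg hN
    rw [Fin.sum_univ_castSucc]
    have h2 : (∑ i : Fin d, (g i.castSucc).choose ((i : ℕ) + 1)) < (g (Fin.last d)).choose d :=
      ih (g (Fin.last d)) (fun i => g i.castSucc)
        (hg.comp Fin.strictMono_castSucc) (fun i => hg (Fin.castSucc_lt_last i))
    have h3 : (g (Fin.last d)).choose d + (g (Fin.last d)).choose (d+1)
        = (g (Fin.last d) + 1).choose (d+1) := (Nat.choose_succ_succ _ _).symm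
    have h4 : (g (Fin.last d) + 1).choose (d+1) ≤ N.choose (d+1) :=
      Nat.choose_le_choose _ (hN (Fin.last d))
    simp only [Fin.coe_castSucc, Fin.val_last]
    omega

lemma myMain : ∀ (d b : ℕ), (d = 0 → b = 0) →
    ∃! g : Fin d → ℕ, StrictMono g ∧ b = ∑ i : Fin d, (g i).choose ((i : ℕ) + 1) := by
  intro d
  induction d with
  | zero =>
    intro b hb
    exact ⟨fun _ => 0, ⟨fun a => a.elim0, by simp [hb rfl]⟩, fun y _ => funext fun i => i.elim0⟩
  | succ d ih =>
    intro b _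
    set P : ℕ → Prop := fun n => n.choose (d+1) ≤ b with hP
    have hm : ∃ m : ℕ, m.choose (d+1) ≤ b ∧ b < (m+1).choose (d+1) := by
      have h0 : P 0 := by simp [hP]
      have hspec : P (Nat.findGreatest P (b + d)) :=
        Nat.findGreatest_spec (Nat.zero_le _) h0
      set m := Nat.findGreatest P (b + d) with hmdef
      refine ⟨m, hspec, ?_⟩
      rcases le_or_gt (m + 1) (b + d) with h | h
      · have := Nat.findGreatest_is_greatest (Nat.lt_succ_self m) h
        simp only [hP, not_le] at this
        exact this
      · have hle : m ≤ b + d := Nat.findGreatest_le _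
        have heq : m = b + d := by omega
        rw [heq]
        have : b + d + 1 = b + d + 1 := rfl
        exact myLtChoose b d
    obtain ⟨m, hm1, hm2⟩ := hm
    set r := b - m.choose (d+1) with hrdef
    have hrb : r + m.choose (d+1) = b := by omega
    have hr : r < m.choose d := by
      have hcs := Nat.choose_succ_succ m d
      simp only [Nat.succ_eq_add_one] at hcs
      omega
    have hr0 : d = 0 → r = 0 := by
      intro h; subst h; simpa using hr
    obtain ⟨g', ⟨hg'1, hg'2⟩, hg'u⟩ := ih r hr0
    have hbound : ∀ i : Fin d, g' i < m := by
      intro i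
      have hd0 : 0 < d := i.pos
      have hjlt : d - 1 < d := Nat.sub_lt hd0 Nat.one_pos
      set jl : Fin d := ⟨d - 1, hjlt⟩ with hjl
      have hlastlt : g' jl < m := by
        by_contra hcon
        push_neg at hcon
        have hterm : (g' jl).choose ((jl : ℕ) + 1) ≤ r := by
          rw [hg'2]
          exact Finset.single_le_sum (f := fun i : Fin d => (g' i).choose ((i : ℕ) + 1))
            (fun j _ => Nat.zero_le _) (Finset.mem_univ jl)
        have hmono : m.choose ((jl : ℕ) + 1) ≤ (g' jl).choose ((jl : ℕ) + 1) :=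
          Nat.choose_le_choose _ hcon
        have hjv : (jl : ℕ) + 1 = d := Nat.succ_pred_eq_of_pos hd0
        rw [hjv] at hterm hmono
        omega
      have hle : g' i ≤ g' jl :=
        hg'1.monotone (show i ≤ jl from Nat.le_pred_of_lt i.isLt)
      omega
    set g : Fin (d+1) → ℕ := Fin.snoc g' m with hgdef
    have hgmono : StrictMono g := by
      intro a b' hab
      induction b' using Fin.lastCases with
      | last =>
        obtain ⟨j, rfl⟩ := Fin.exists_castSucc_eq.mpr (Fin.ne_last_of_lt hab)
        simpa [hgdef] using hbound j
      | cast j =>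
        obtain ⟨i', rfl⟩ := Fin.exists_castSucc_eq.mpr
          (Fin.ne_last_of_lt (hab.trans (Fin.castSucc_lt_last j)))
        simp only [hgdef, Fin.snoc_castSucc]
        exact hg'1 (Fin.castSucc_lt_castSucc_iff.mp hab)
    have hgsum : b = ∑ i : Fin (d+1), (g i).choose ((i : ℕ) + 1) := by
      rw [Fin.sum_univ_castSucc]
      simp only [hgdef, Fin.snoc_castSucc, Fin.snoc_last, Fin.val_last, Fin.coe_castSucc]
      rw [← hg'2]
      omega
    refine ⟨g, ⟨hgmono, hgsum⟩, ?_⟩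
    rintro y ⟨hy1, hy2⟩
    have hylast : y (Fin.last d) = m := by
      have h1 : (y (Fin.last d)).choose (d+1) ≤ b := by
        rw [hy2]
        have := Finset.single_le_sum (f := fun i : Fin (d+1) => (y i).choose ((i : ℕ) + 1))
          (fun j _ => Nat.zero_le _) (Finset.mem_univ (Fin.last d))
        simpa using this
      have h2 : b < (y (Fin.last d) + 1).choose (d+1) := by
        have := mySumLt (d+1) (y (Fin.last d) + 1) y hy1
          (fun i => Nat.lt_succ_of_le (hy1.monotone (Fin.le_last i)))
        rw [← hy2] at this
        exact this
      by_contra hne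
      rcases lt_or_gt_of_ne hne with h | h
      · have hcc := Nat.choose_le_choose (d+1) (Nat.succ_le_of_lt h)
        simp only [Nat.succ_eq_add_one] at hcc
        omega
      · have hcc := Nat.choose_le_choose (d+1) (Nat.succ_le_of_lt h)
        simp only [Nat.succ_eq_add_one] at hcc
        omega
    have hsplit : r = ∑ i : Fin d, (y i.castSucc).choose ((i : ℕ) + 1) := by
      have h := hy2
      rw [Fin.sum_univ_castSucc] at h
      simp only [Fin.val_last, hylast, Fin.coe_castSucc] at h
      omega
    have hycast : (fun i : Fin d => y i.castSucc) = g' :=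
      hg'u _ ⟨hy1.comp Fin.strictMono_castSucc, hsplit⟩
    funext i
    induction i using Fin.lastCases with
    | last => simp [hgdef, Fin.snoc_last, hylast]
    | cast j =>
      have := congrFun hycast j
      simp only [hgdef, Fin.snoc_castSucc]
      exact this

/-- Every positive integer `a` can be written **uniquely** in the form
`a = C(k_d,d) + C(k_{d-1},d-1) + … + C(k_2,2) + C(k_1,1)` with
`k_d > k_{d-1} > … > k_2 ≥ k_1 ≥ 1` (where `C(p,q) = 0` when `p < q`). -/
theorem fractal_decomposition_exists_unique (d a : ℕ) (hd : 0 < d) (ha : 0 < a) :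
    ∃! k : Fin d → ℕ, IsFracDecomp d a k := by
  obtain ⟨e, rfl⟩ : ∃ e, d = e + 1 := ⟨d - 1, by omega⟩
  obtain ⟨g, ⟨hg1, hg2⟩, hgu⟩ := myMain (e + 1) (a - 1) (by omega)
  set k : Fin (e + 1) → ℕ := fun i => if (i : ℕ) = 0 then g i + 1 else g i with hk
  have hkmk0 : ∀ h : 0 < e + 1, k ⟨0, h⟩ = g ⟨0, h⟩ + 1 := fun h => if_pos rfl
  have hkmkS : ∀ (j) (h : j + 1 < e + 1), k ⟨j + 1, h⟩ = g ⟨j + 1, h⟩ :=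
    fun j h => if_neg (Nat.succ_ne_zero j)
  have hcond : FracCond (e + 1) k := by
    constructor
    · intro h
      rw [hkmk0]
      omega
    · intro i hi
      rcases eq_or_ne i 0 with rfl | h0
      · rw [if_pos rfl, hkmk0, hkmkS 0 hi]
        exact Nat.succ_le_of_lt (hg1 (Fin.mk_lt_mk.mpr (by omega)))
      · obtain ⟨j, rfl⟩ := Nat.exists_eq_succ_of_ne_zero h0
        rw [if_neg h0, hkmkS j (Nat.lt_of_succ_lt hi), hkmkS (j + 1) hi]
        exact hg1 (Fin.mk_lt_mk.mpr (by omega))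
  have hk00 : k 0 = g 0 + 1 := if_pos rfl
  have hkS : ∀ i : Fin e, k i.succ = g i.succ := fun i => if_neg (by simp)
  have hksum : a = ∑ i : Fin (e + 1), (k i).choose ((i : ℕ) + 1) := by
    have hg2' := hg2
    rw [Fin.sum_univ_succ] at hg2'
    have hseq : ∑ i : Fin e, (k i.succ).choose ((i.succ : ℕ) + 1)
        = ∑ i : Fin e, (g i.succ).choose ((i.succ : ℕ) + 1) :=
      Finset.sum_congr rfl (fun i _ => by rw [hkS i])
    rw [Fin.sum_univ_succ, hseq, hk00]
    simp only [Fin.val_zero, zero_add, Nat.choose_one_right] at hg2' ⊢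
    omega
  refine ⟨k, ⟨hcond, hksum⟩, ?_⟩
  rintro k' ⟨⟨hc1, hc2⟩, hsum'⟩
  set g' : Fin (e + 1) → ℕ := fun i => if (i : ℕ) = 0 then k' i - 1 else k' i with hg'
  have hk'0 : 1 ≤ k' ⟨0, Nat.succ_pos e⟩ := hc1 _
  have hsm : StrictMono g' := by
    rw [Fin.strictMono_iff_lt_succ]
    intro i
    have hilt : (i : ℕ) < e + 1 := Nat.lt_of_lt_of_le i.isLt (Nat.le_succ e)
    have hilt2 : (i : ℕ) + 1 < e + 1 := Nat.succ_lt_succ i.isLt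
    have hcs : i.castSucc = (⟨(i : ℕ), hilt⟩ : Fin (e + 1)) := rfl
    have hsc : i.succ = (⟨(i : ℕ) + 1, hilt2⟩ : Fin (e + 1)) := rfl
    have hgS : g' ⟨(i : ℕ) + 1, hilt2⟩ = k' ⟨(i : ℕ) + 1, hilt2⟩ :=
      if_neg (Nat.succ_ne_zero _)
    rw [hcs, hsc, hgS]
    have h2 := hc2 (i : ℕ) hilt2
    rcases eq_or_ne (i : ℕ) 0 with h0 | h0
    · rw [if_pos h0] at h2
      have hg0 : g' ⟨(i : ℕ), hilt⟩ = k' ⟨(i : ℕ), hilt⟩ - 1 := if_pos h0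
      have hk1 : 1 ≤ k' ⟨(i : ℕ), hilt⟩ := by
        have hi0 : (⟨(i : ℕ), hilt⟩ : Fin (e + 1)) = ⟨0, Nat.succ_pos e⟩ := Fin.ext h0
        rw [hi0]; exact hk'0
      rw [hg0]
      omega
    · rw [if_neg h0] at h2
      have hgne : g' ⟨(i : ℕ), hilt⟩ = k' ⟨(i : ℕ), hilt⟩ := if_neg h0
      rw [hgne]
      omega
  have hg'00 : g' 0 = k' 0 - 1 := if_pos rfl
  have hg'S : ∀ i : Fin e, g' i.succ = k' i.succ := fun i => if_neg (by simp)
  have hk'00 : 1 ≤ k' 0 := hc1 (Nat.succ_pos e)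
  have hgsum' : a - 1 = ∑ i : Fin (e + 1), (g' i).choose ((i : ℕ) + 1) := by
    have hs := hsum'
    rw [Fin.sum_univ_succ] at hs
    have hseq : ∑ i : Fin e, (g' i.succ).choose ((i.succ : ℕ) + 1)
        = ∑ i : Fin e, (k' i.succ).choose ((i.succ : ℕ) + 1) :=
      Finset.sum_congr rfl (fun i _ => by rw [hg'S i])
    rw [Fin.sum_univ_succ, hseq, hg'00]
    simp only [Fin.val_zero, zero_add, Nat.choose_one_right] at hs ⊢
    omega
  have hgg : g' = g := hgu g' ⟨hsm, hgsum'⟩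
  funext i
  rcases eq_or_ne (i : ℕ) 0 with h0 | h0
  · have hgi : g' i = k' i - 1 := if_pos h0
    have hki : k i = g i + 1 := if_pos h0
    have hk1 : 1 ≤ k' i := by
      have hi0 : i = (⟨0, Nat.succ_pos e⟩ : Fin (e + 1)) := Fin.ext h0
      rw [hi0]; exact hk'0
    rw [hki, ← hgg]
    omega
  · have hgi : g' i = k' i := if_neg h0
    have hki : k i = g i := if_neg h0
    rw [hki, ← hgg, hgi]
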